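/- arXiv:1408.5534 — 6 statements merged into one kernel-verified Lean document; each statement's English description precedes it below -/
import Mathlib

section
/- Euclidean sagitta identity on the boundary circle (k = 0 case of Proposition 1.2, part 1): let E be a real inner product space, a ∈ E, r > 0, and let q ∈ E satisfy ‖q − a‖ = r. Let t ∈ [−1, 1] and set p = a + t·(q − a) (so p lies in the closed ball of radius r about a, on the line through a and q). Then for every x ∈ E with ‖x − a‖ = r and x ≠ q, (‖p − x‖² − ‖p − q‖²) / ‖q − x‖² = (r − ‖p − q‖)/r. -/
/-- Euclidean sagitta identity on the boundary circle (`k = 0` case): if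
`‖q − a‖ = r`, `p = a + t(q − a)` with `t ∈ [−1,1]`, then for every `x` with
`‖x − a‖ = r` and `x ≠ q`, `(‖p − x‖² − ‖p − q‖²)/‖q − x‖² = (r − ‖p − q‖)/r`. -/
theorem euclidean_sagitta_identity {E : Type*} [NormedAddCommGroup E]
    [InnerProductSpace ℝ E] (a q : E) (r : ℝ) (hr : 0 < r) (hq : ‖q - a‖ = r)
    (t : ℝ) (ht : t ∈ Set.Icc (-1 : ℝ) 1) (p : E) (hp : p = a + t • (q - a))
    (x : E) (hx : ‖x - a‖ = r) (hxq : x ≠ q) :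
    (‖p - x‖ ^ 2 - ‖p - q‖ ^ 2) / ‖q - x‖ ^ 2 = (r - ‖p - q‖) / r := by
  obtain ⟨ht1, ht2⟩ := ht
  set s : ℝ := inner ℝ (q - a) (x - a) with hs
  have hqx : ‖q - x‖ ^ 2 = 2 * (r ^ 2 - s) := by
    have : q - x = (q - a) - (x - a) := by abel
    rw [this, norm_sub_sq_real, hq, hx, ← hs]; ring
  have hqxpos : 0 < ‖q - x‖ ^ 2 := by
    have : q - x ≠ 0 := sub_ne_zero.mpr (Ne.symm hxq)
    have h0 : 0 < ‖q - x‖ := norm_pos_iff.mpr this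
    positivity
  have hden : r ^ 2 - s > 0 := by linarith [hqx ▸ hqxpos]
  have hpq : ‖p - q‖ = (1 - t) * r := by
    have : p - q = (t - 1) • (q - a) := by rw [hp]; module
    rw [this, norm_smul, hq, Real.norm_eq_abs, abs_of_nonpos (by linarith)]
    ring
  have hpx : ‖p - x‖ ^ 2 = t ^ 2 * r ^ 2 - 2 * t * s + r ^ 2 := by
    have h1 : p - x = t • (q - a) - (x - a) := by rw [hp]; module
    rw [h1, norm_sub_sq_real, norm_smul, real_inner_smul_left, ← hs, hq, hx,
      Real.norm_eq_abs]
    rw [mul_pow, sq_abs]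
    ring
  rw [hpx, hpq, hqx]
  field_simp
  ring
end

section
/- Euclidean sagitta inequalities inside and outside the circle (k = 0 case of Proposition 1.2, part 2): let E be a real inner product space, a ∈ E, r > 0, q ∈ E with ‖q − a‖ = r, t ∈ [−1, 1) and p = a + t·(q − a) (so p ≠ q lies in the closed ball of radius r about a on the line through a and q). Then: (i) for every x with ‖x − a‖ < r and x ≠ q, (‖p − x‖² − ‖p − q‖²)/‖q − x‖² < (r − ‖p − q‖)/r; and (ii) for every x with ‖x − a‖ > r, (‖p − x‖² − ‖p − q‖²)/‖q − x‖² > (r − ‖p − q‖)/r. -/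
/-- Euclidean sagitta inequalities inside and outside the circle (`k = 0` case):
if `‖q − a‖ = r`, `p = a + t(q − a)` with `t ∈ [−1,1)`, then the ratio
`(‖p − x‖² − ‖p − q‖²)/‖q − x‖²` is `< (r − ‖p − q‖)/r` for `x ≠ q` strictly
inside the ball, and `> (r − ‖p − q‖)/r` for `x` strictly outside. -/
theorem euclidean_sagitta_inequalities {E : Type*} [NormedAddCommGroup E]
    [InnerProductSpace ℝ E] (a q : E) (r : ℝ) (hr : 0 < r) (hq : ‖q - a‖ = r)
    (t : ℝ) (ht : t ∈ Set.Ico (-1 : ℝ) 1) (p : E) (hp : p = a + t • (q - a)) :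
    (∀ x : E, ‖x - a‖ < r → x ≠ q →
      (‖p - x‖ ^ 2 - ‖p - q‖ ^ 2) / ‖q - x‖ ^ 2 < (r - ‖p - q‖) / r) ∧
    (∀ x : E, r < ‖x - a‖ →
      (r - ‖p - q‖) / r < (‖p - x‖ ^ 2 - ‖p - q‖ ^ 2) / ‖q - x‖ ^ 2) := by
  obtain ⟨ht1, ht2⟩ := ht
  have e : ∀ v : E, ‖v‖ ^ 2 = (inner ℝ v v : ℝ) := fun v =>
    (real_inner_self_eq_norm_sq v).symm
  have hr2 : (inner ℝ (q - a) (q - a) : ℝ) = r ^ 2 := by rw [← e, hq]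
  have hpq : ‖p - q‖ = (1 - t) * r := by
    have h3 : p - q = (1 - t) • (a - q) := by rw [hp]; module
    rw [h3, norm_smul, Real.norm_eq_abs, abs_of_nonneg (by linarith),
      norm_sub_rev, hq]
  have hrhs : (r - ‖p - q‖) / r = t := by
    rw [hpq]; field_simp; ring
  have key : ∀ x : E, ‖p - x‖ ^ 2 - ‖p - q‖ ^ 2 =
      t * ‖q - x‖ ^ 2 + (1 - t) * (‖x - a‖ ^ 2 - r ^ 2) := by
    intro x
    have h1 : p - x = t • (q - a) - (x - a) := by rw [hp]; module
    have h2 : q - x = (q - a) - (x - a) := by abel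
    have h3 : p - q = (1 - t) • (a - q) := by rw [hp]; module
    have h4 : a - q = -(q - a) := by abel
    rw [h1, h2, h3, h4, e, e, e, e]
    simp only [inner_sub_left, inner_sub_right, real_inner_smul_left,
      real_inner_smul_right, inner_neg_left, inner_neg_right,
      real_inner_comm q a, real_inner_comm x a, real_inner_comm x q] at hr2 ⊢
    linear_combination (t - 1) * hr2
  constructor
  · intro x hx hxq
    have hqx : (0 : ℝ) < ‖q - x‖ ^ 2 := by
      exact pow_pos (norm_pos_iff.mpr (sub_ne_zero.mpr (Ne.symm hxq))) 2
    rw [hrhs, div_lt_iff₀ hqx, key x]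
    have hx2 : ‖x - a‖ ^ 2 < r ^ 2 := by
      apply pow_lt_pow_left₀ hx (norm_nonneg _)
      norm_num
    nlinarith
  · intro x hx
    have hxq : x ≠ q := by
      intro h; rw [h, hq] at hx; exact lt_irrefl _ hx
    have hqx : (0 : ℝ) < ‖q - x‖ ^ 2 := by
      exact pow_pos (norm_pos_iff.mpr (sub_ne_zero.mpr (Ne.symm hxq))) 2
    rw [hrhs, lt_div_iff₀ hqx, key x]
    have hx2 : r ^ 2 < ‖x - a‖ ^ 2 := by
      apply pow_lt_pow_left₀ hx hr.le
      norm_num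
    nlinarith
end

section
/- Disk characterization by eccentricity ratio (Euclidean case): let E be a real inner product space, let p, q ∈ E with p ≠ q, and let λ < 1 be a real number. Set R = ‖p − q‖/(1 − λ) and a = q + (1/(1 − λ))·(p − q). Then q lies on the sphere of radius R about a, and for every x ∈ E with x ≠ q: ‖x − a‖ ≤ R if and only if (‖p − x‖² − ‖p − q‖²)/‖q − x‖² ≤ λ. Moreover, if λ ≥ −1 then ‖p − a‖ ≤ R (i.e. p lies in the closed ball). -/
open scoped RealInnerProductSpace


/-- Disk characterization by eccentricity ratio (Euclidean case): for `p ≠ q` and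
`λ < 1`, with `R = ‖p − q‖/(1 − λ)` and `a = q + (1/(1 − λ))(p − q)`, the point `q`
lies on the sphere of radius `R` about `a`; a point `x ≠ q` lies in the closed ball
iff the eccentricity ratio is `≤ λ`; and if `λ ≥ −1` then `p` lies in the closed
ball. -/
theorem disk_characterization {E : Type*} [NormedAddCommGroup E]
    [InnerProductSpace ℝ E] (p q : E) (hpq : p ≠ q) (lam : ℝ) (hlam : lam < 1)
    (R : ℝ) (hR : R = ‖p - q‖ / (1 - lam))
    (a : E) (ha : a = q + (1 / (1 - lam)) • (p - q)) :
    ‖q - a‖ = R ∧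
    (∀ x : E, x ≠ q →
      (‖x - a‖ ≤ R ↔ (‖p - x‖ ^ 2 - ‖p - q‖ ^ 2) / ‖q - x‖ ^ 2 ≤ lam)) ∧
    (-1 ≤ lam → ‖p - a‖ ≤ R) := by
  have hs : (0:ℝ) < 1 - lam := by linarith
  have hu : (0:ℝ) < ‖p - q‖ := by
    simpa [sub_eq_zero] using norm_pos_iff.2 (sub_ne_zero.2 hpq)
  have hqa : q - a = -((1 / (1 - lam)) • (p - q)) := by
    rw [ha]; abel
  have hnqa : ‖q - a‖ = R := by
    rw [hqa, norm_neg, norm_smul, Real.norm_eq_abs, abs_of_pos (by positivity), hR]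
    ring
  have hR0 : 0 < R := by rw [hR]; positivity
  refine ⟨hnqa, ?_, ?_⟩
  · intro x hx
    have hv : (0:ℝ) < ‖x - q‖ := by
      simpa [sub_eq_zero] using norm_pos_iff.2 (sub_ne_zero.2 hx)
    have hxa : x - a = (x - q) - (1 / (1 - lam)) • (p - q) := by
      rw [ha]; abel
    have h1 : ‖x - a‖ ^ 2 =
        ‖x - q‖ ^ 2 - 2 * ((1 / (1 - lam)) * (inner ℝ (x - q) (p - q) : ℝ))
          + (1 / (1 - lam)) ^ 2 * ‖p - q‖ ^ 2 := by
      rw [hxa, @norm_sub_sq_real, real_inner_smul_right, norm_smul,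
        Real.norm_eq_abs, abs_of_pos (by positivity)]
      ring
    have h2 : ‖p - x‖ ^ 2 = ‖p - q‖ ^ 2 - 2 * (inner ℝ (x - q) (p - q) : ℝ) + ‖x - q‖ ^ 2 := by
      have : p - x = (p - q) - (x - q) := by abel
      rw [this, @norm_sub_sq_real, real_inner_comm]
    have hqx : ‖q - x‖ = ‖x - q‖ := by rw [norm_sub_rev]
    have hiff1 : ‖x - a‖ ≤ R ↔ ‖x - a‖ ^ 2 ≤ R ^ 2 :=
      (pow_le_pow_iff_left₀ (norm_nonneg _) hR0.le two_ne_zero).symm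
    rw [hiff1, h1, hR, hqx, h2, div_le_iff₀ (by positivity)]
    have hinv : (1 - lam) * (1 / (1 - lam)) = 1 := by
      field_simp
    set I : ℝ := inner ℝ (x - q) (p - q) with hI
    have heq : (‖p - q‖ / (1 - lam)) ^ 2 = (1 / (1 - lam)) ^ 2 * ‖p - q‖ ^ 2 := by
      ring
    constructor <;> intro h
    · have key : ‖x - q‖ ^ 2 ≤ 2 * (1 / (1 - lam) * I) := by linarith
      have h3 := mul_le_mul_of_nonneg_left key hs.le
      have h4 : (1 - lam) * (2 * (1 / (1 - lam) * I)) = 2 * I := by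
        calc (1 - lam) * (2 * (1 / (1 - lam) * I))
            = 2 * ((1 - lam) * (1 / (1 - lam))) * I := by ring
          _ = 2 * I := by rw [hinv]; ring
      rw [h4] at h3
      nlinarith
    · have key : (1 - lam) * ‖x - q‖ ^ 2 ≤ 2 * I := by nlinarith
      have h3 := mul_le_mul_of_nonneg_left key (by positivity : (0:ℝ) ≤ 1 / (1 - lam))
      have h4 : 1 / (1 - lam) * ((1 - lam) * ‖x - q‖ ^ 2) = ‖x - q‖ ^ 2 := by
        calc 1 / (1 - lam) * ((1 - lam) * ‖x - q‖ ^ 2)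
            = ((1 - lam) * (1 / (1 - lam))) * ‖x - q‖ ^ 2 := by ring
          _ = ‖x - q‖ ^ 2 := by rw [hinv]; ring
      rw [h4] at h3
      linarith
  · intro hl
    have hpa : p - a = (1 - 1 / (1 - lam)) • (p - q) := by
      rw [ha]; rw [sub_smul, one_smul]; abel
    rw [hpa, norm_smul, Real.norm_eq_abs, hR]
    have ht : 1 / 2 ≤ 1 / (1 - lam) := by
      rw [div_le_div_iff₀ (by norm_num) hs]; linarith
    have habs : |1 - 1 / (1 - lam)| ≤ 1 / (1 - lam) := by
      rw [abs_le]
      constructor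
      · linarith
      · have : (0:ℝ) < 1 / (1 - lam) := by positivity
        linarith
    calc |1 - 1 / (1 - lam)| * ‖p - q‖ ≤ (1 / (1 - lam)) * ‖p - q‖ :=
          mul_le_mul_of_nonneg_right habs (norm_nonneg _)
      _ = ‖p - q‖ / (1 - lam) := by ring
end

section
/- Spherical sagitta identity on the boundary circle (k = 1 case of Proposition 1.2, part 1): let E be a real inner product space and let a, u ∈ E be unit vectors with ⟨a,u⟩ = 0. Let r ∈ (0, π/2] and h ∈ [0, 2r], and set p = cos(r − h)·a + sin(r − h)·u and q = cos r·a + sin r·u (so p and q are unit vectors on the geodesic through a in direction u, with ⟨p,q⟩ = cos h, d(a,q) = r and d(a,p) = |r − h| ≤ r). Then for every unit vector x ∈ E with ⟨a,x⟩ = cos r and x ≠ q, (⟨p,q⟩ − ⟨p,x⟩) / (1 − ⟨q,x⟩) = sin(r − h)/sin r. -/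
open scoped RealInnerProductSpace

/-- Spherical sagitta identity on the boundary circle (`k = 1` case): with `a, u`
orthonormal, `r ∈ (0, π/2]`, `h ∈ [0, 2r]`, `p = cos(r − h)a + sin(r − h)u`,
`q = cos r·a + sin r·u`, every unit vector `x` with `⟪a,x⟫ = cos r` and `x ≠ q`
satisfies `(⟪p,q⟫ − ⟪p,x⟫)/(1 − ⟪q,x⟫) = sin(r − h)/sin r`. -/
theorem spherical_sagitta_identity {E : Type*} [NormedAddCommGroup E]
    [InnerProductSpace ℝ E] (a u : E) (ha : ‖a‖ = 1) (hu : ‖u‖ = 1)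
    (hau : ⟪a, u⟫ = 0) (r h : ℝ) (hr : r ∈ Set.Ioc 0 (Real.pi / 2))
    (hh : h ∈ Set.Icc 0 (2 * r)) (p q : E)
    (hp : p = Real.cos (r - h) • a + Real.sin (r - h) • u)
    (hq : q = Real.cos r • a + Real.sin r • u)
    (x : E) (hx : ‖x‖ = 1) (hax : ⟪a, x⟫ = Real.cos r) (hxq : x ≠ q) :
    (⟪p, q⟫ - ⟪p, x⟫) / (1 - ⟪q, x⟫) = Real.sin (r - h) / Real.sin r := by
  have hsr : 0 < Real.sin r :=
    Real.sin_pos_of_pos_of_lt_pi hr.1 (lt_of_le_of_lt hr.2 (by linarith [Real.pi_pos]))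
  have haa : ⟪a, a⟫ = (1 : ℝ) := by
    rw [real_inner_self_eq_norm_sq, ha]; norm_num
  have huu : ⟪u, u⟫ = (1 : ℝ) := by
    rw [real_inner_self_eq_norm_sq, hu]; norm_num
  have hua : ⟪u, a⟫ = 0 := by rw [real_inner_comm]; exact hau
  set t := ⟪u, x⟫ with ht
  have hpq : ⟪p, q⟫ = Real.cos (r - h) * Real.cos r + Real.sin (r - h) * Real.sin r := by
    simp [hp, hq, inner_add_add_self, inner_add_left, inner_add_right, inner_smul_left,
      inner_smul_right, haa, huu, hau, hua, ha, hu]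
    ring
  have hpx : ⟪p, x⟫ = Real.cos (r - h) * Real.cos r + Real.sin (r - h) * t := by
    simp [hp, inner_add_left, inner_smul_left, hax, ht]
  have hqx : ⟪q, x⟫ = Real.cos r * Real.cos r + Real.sin r * t := by
    simp [hq, inner_add_left, inner_smul_left, hax, ht]
  have htne : t ≠ Real.sin r := by
    intro hteq
    apply hxq
    have : ⟪q, x⟫ = 1 := by
      rw [hqx, hteq]
      have := Real.sin_sq_add_cos_sq r
      nlinarith
    have hqn : ‖q‖ = 1 := by
      have hq2 : ⟪q, q⟫ = (1 : ℝ) := by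
        rw [hq]
        simp only [inner_add_left, inner_add_right, real_inner_smul_left, real_inner_smul_right,
          haa, huu, hau, hua]
        nlinarith [Real.sin_sq_add_cos_sq r]
      have := real_inner_self_eq_norm_sq q
      nlinarith [norm_nonneg q]
    exact ((inner_eq_one_iff_of_norm_eq_one hqn hx).mp this).symm
  rw [hpq, hpx, hqx]
  have h1 : Real.cos (r - h) * Real.cos r + Real.sin (r - h) * Real.sin r -
      (Real.cos (r - h) * Real.cos r + Real.sin (r - h) * t)
      = Real.sin (r - h) * (Real.sin r - t) := by ring
  have h2 : 1 - (Real.cos r * Real.cos r + Real.sin r * t)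
      = Real.sin r * (Real.sin r - t) := by
    linear_combination (-1 : ℝ) * Real.sin_sq_add_cos_sq r
  rw [h1, h2, mul_div_mul_right _ _ (sub_ne_zero.mpr (Ne.symm htne))]
end

section
/- Existence and uniqueness of the critical radius r_λ for k > 0: let k > 0, h ∈ (0, π/√k), and λ ∈ ℝ. Then there exists a unique r ∈ (0, π/√k) such that sin(√k·(r − h)) = λ · sin(√k·r), i.e. such that m_k'(r − h)/m_k'(r) = λ. -/
/-- Existence and uniqueness of the critical radius `r_λ` for `k > 0`: for
`h ∈ (0, π/√k)` and any `λ ∈ ℝ`, there is a unique `r ∈ (0, π/√k)` with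
`sin(√k(r − h)) = λ sin(√k r)`, i.e. `m_k'(r − h)/m_k'(r) = λ`. -/
theorem critical_radius_pos (k h lam : ℝ) (hk : 0 < k)
    (hh : h ∈ Set.Ioo 0 (Real.pi / Real.sqrt k)) :
    ∃! r : ℝ, r ∈ Set.Ioo 0 (Real.pi / Real.sqrt k) ∧
      Real.sin (Real.sqrt k * (r - h)) = lam * Real.sin (Real.sqrt k * r) := by
  obtain ⟨hh0, hh1⟩ := hh
  set a := Real.sqrt k with ha
  have ha0 : 0 < a := Real.sqrt_pos.mpr hk
  have hah0 : 0 < a * h := mul_pos ha0 hh0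
  have hahπ : a * h < Real.pi := by
    have := (lt_div_iff₀ ha0).mp hh1
    nlinarith
  have sinah : 0 < Real.sin (a * h) := Real.sin_pos_of_pos_of_lt_pi hah0 hahπ
  set c : ℝ := (Real.cos (a * h) - lam) / Real.sin (a * h) with hc
  have key : ∀ r ∈ Set.Ioo (0:ℝ) (Real.pi / a),
      (Real.sin (a * (r - h)) = lam * Real.sin (a * r) ↔
        Real.tan (Real.pi / 2 - a * r) = c) := by
    intro r hr
    have hx0 : 0 < a * r := mul_pos ha0 hr.1
    have hxπ : a * r < Real.pi := by
      have := (lt_div_iff₀ ha0).mp hr.2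
      nlinarith
    have hsx : 0 < Real.sin (a * r) := Real.sin_pos_of_pos_of_lt_pi hx0 hxπ
    have htan : Real.tan (Real.pi / 2 - a * r)
        = Real.cos (a * r) / Real.sin (a * r) := by
      rw [Real.tan_pi_div_two_sub, Real.tan_eq_sin_div_cos, inv_div]
    rw [htan, hc, div_eq_div_iff hsx.ne' sinah.ne', mul_sub, Real.sin_sub]
    constructor <;> intro H <;> nlinarith [H]
  have hmem : Real.arctan c ∈ Set.Ioo (-(Real.pi/2)) (Real.pi/2) :=
    ⟨Real.neg_pi_div_two_lt_arctan c, Real.arctan_lt_pi_div_two c⟩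
  refine ⟨(Real.pi / 2 - Real.arctan c) / a, ⟨⟨?_, ?_⟩, ?_⟩, ?_⟩
  · have : 0 < Real.pi / 2 - Real.arctan c := by
      have := hmem.2; linarith
    positivity
  · rw [div_lt_div_iff₀ ha0 ha0]
    have := hmem.1
    have hπ := Real.pi_pos
    nlinarith
  · have hr : (Real.pi / 2 - Real.arctan c) / a ∈ Set.Ioo (0:ℝ) (Real.pi / a) := by
      constructor
      · have : 0 < Real.pi / 2 - Real.arctan c := by have := hmem.2; linarith
        positivity
      · rw [div_lt_div_iff₀ ha0 ha0]
        have := hmem.1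
        have hπ := Real.pi_pos
        nlinarith
    rw [key _ hr]
    rw [mul_div_cancel₀ _ ha0.ne']
    have : Real.pi / 2 - (Real.pi / 2 - Real.arctan c) = Real.arctan c := by ring
    rw [this, Real.tan_arctan]
  · rintro r' ⟨hr', heq'⟩
    have hr : (Real.pi / 2 - Real.arctan c) / a ∈ Set.Ioo (0:ℝ) (Real.pi / a) := by
      constructor
      · have : 0 < Real.pi / 2 - Real.arctan c := by have := hmem.2; linarith
        positivity
      · rw [div_lt_div_iff₀ ha0 ha0]
        have := hmem.1
        have hπ := Real.pi_pos
        nlinarith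
    have h1 : Real.tan (Real.pi / 2 - a * r') = c := (key _ hr').mp heq'
    have h2 : Real.tan (Real.pi / 2 - a * ((Real.pi / 2 - Real.arctan c) / a)) = c := by
      rw [mul_div_cancel₀ _ ha0.ne']
      have : Real.pi / 2 - (Real.pi / 2 - Real.arctan c) = Real.arctan c := by ring
      rw [this, Real.tan_arctan]
    have hx1 : 0 < a * r' := mul_pos ha0 hr'.1
    have hx1π : a * r' < Real.pi := by
      have := (lt_div_iff₀ ha0).mp hr'.2; nlinarith
    have hx2 : 0 < a * ((Real.pi / 2 - Real.arctan c) / a) := mul_pos ha0 hr.1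
    have hx2π : a * ((Real.pi / 2 - Real.arctan c) / a) < Real.pi := by
      have := (lt_div_iff₀ ha0).mp hr.2; nlinarith
    have hmem1 : Real.pi / 2 - a * r' ∈ Set.Ioo (-(Real.pi/2)) (Real.pi/2) := by
      constructor <;> simp <;> linarith
    have hmem2 : Real.pi / 2 - a * ((Real.pi / 2 - Real.arctan c) / a)
        ∈ Set.Ioo (-(Real.pi/2)) (Real.pi/2) := by
      constructor <;> simp <;> linarith
    have := Real.injOn_tan hmem1 hmem2 (by rw [h1, h2])
    have hxx : a * r' = a * ((Real.pi / 2 - Real.arctan c) / a) := by linarith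
    exact mul_left_cancel₀ ha0.ne' hxx
end

section
/- Existence and uniqueness of the critical radius r_λ for k < 0: let k < 0, h > 0, write c = √(−k), and let λ be a real number with λ < e^{−c·h}. Then there exists a unique r ∈ (0, ∞) such that sinh(c·(r − h)) = λ · sinh(c·r), i.e. such that m_k'(r − h)/m_k'(r) = λ. -/
/-- Existence and uniqueness of the critical radius `r_λ` for `k < 0`: with
`c = √(−k)`, `h > 0`, and `λ < e^{−c h}`, there is a unique `r ∈ (0, ∞)` with
`sinh(c(r − h)) = λ sinh(c r)`, i.e. `m_k'(r − h)/m_k'(r) = λ`. -/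
theorem critical_radius_neg (k h lam : ℝ) (hk : k < 0) (hh : 0 < h)
    (hlam : lam < Real.exp (-(Real.sqrt (-k) * h))) :
    ∃! r : ℝ, r ∈ Set.Ioi (0 : ℝ) ∧
      Real.sinh (Real.sqrt (-k) * (r - h)) = lam * Real.sinh (Real.sqrt (-k) * r) := by
  set c := Real.sqrt (-k) with hc
  have hcpos : 0 < c := Real.sqrt_pos.mpr (by linarith)
  set A := Real.exp (-(c * h)) - lam with hA
  set B := Real.exp (c * h) - lam with hB
  have hApos : 0 < A := by simp only [hA]; linarith
  have hAB : A < B := by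
    have : Real.exp (-(c * h)) < Real.exp (c * h) := by
      apply Real.exp_lt_exp.mpr
      nlinarith [mul_pos hcpos hh]
    simp only [hA, hB]; linarith
  have hBpos : 0 < B := lt_trans hApos hAB
  -- reformulate the equation
  have key : ∀ r : ℝ, (Real.sinh (c * (r - h)) = lam * Real.sinh (c * r)) ↔
      Real.exp (2 * (c * r)) * A = B := by
    intro r
    have hE : (0 : ℝ) < Real.exp (c * r) := Real.exp_pos _
    have e1 : Real.exp (c * (r - h)) = Real.exp (c * r) * Real.exp (-(c * h)) := by
      rw [← Real.exp_add]; ring_nf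
    have e2 : Real.exp (-(c * (r - h))) = (Real.exp (c * r))⁻¹ * Real.exp (c * h) := by
      rw [← Real.exp_neg, ← Real.exp_add]; ring_nf
    have e3 : Real.exp (2 * (c * r)) = Real.exp (c * r) * Real.exp (c * r) := by
      rw [← Real.exp_add]; ring_nf
    have iden : Real.sinh (c * (r - h)) - lam * Real.sinh (c * r) =
        (Real.exp (2 * (c * r)) * A - B) / (2 * Real.exp (c * r)) := by
      rw [Real.sinh_eq, Real.sinh_eq, Real.exp_neg (c * r), e1, e2, e3, hA, hB]
      field_simp
      ring
    constructor
    · intro H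
      have h0 : (Real.exp (2 * (c * r)) * A - B) / (2 * Real.exp (c * r)) = 0 := by
        rw [← iden]; linarith
      have h2 : (2 : ℝ) * Real.exp (c * r) ≠ 0 := by positivity
      rw [div_eq_zero_iff] at h0
      rcases h0 with h0 | h0
      · linarith
      · exact absurd h0 h2
    · intro H
      have : Real.sinh (c * (r - h)) - lam * Real.sinh (c * r) = 0 := by
        rw [iden, H, sub_self, zero_div]
      linarith
  set r₀ := Real.log (B / A) / (2 * c) with hr₀
  have hBA1 : 1 < B / A := (one_lt_div hApos).mpr hAB
  have hlog : 0 < Real.log (B / A) := Real.log_pos hBA1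
  have hr₀pos : 0 < r₀ := div_pos hlog (by linarith)
  have hexp : Real.exp (2 * (c * r₀)) = B / A := by
    have : 2 * (c * r₀) = Real.log (B / A) := by
      rw [hr₀]; field_simp
    rw [this, Real.exp_log (by positivity)]
  refine ⟨r₀, ⟨Set.mem_Ioi.mpr hr₀pos, ?_⟩, ?_⟩
  · rw [key r₀, hexp, div_mul_cancel₀ _ hApos.ne']
  · rintro r ⟨-, hr⟩
    rw [key r] at hr
    have h1 : Real.exp (2 * (c * r)) = B / A := by
      field_simp at hr ⊢; linarith
    have h2 : 2 * (c * r) = 2 * (c * r₀) :=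
      Real.exp_eq_exp.mp (h1.trans hexp.symm)
    have hc2 : (2 : ℝ) * c ≠ 0 := by positivity
    nlinarith [hcpos]
end
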